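/- Let K be a real symmetric positive semidefinite N × N matrix whose diagonal entries are all equal to a constant c ≥ 0, and let p, q ∈ ℝ^N be probability vectors (nonnegative entries summing to 1). Then the nuclear norm of the matrix diag(√p) · K · diag(√q) is at most c, where diag(√p) is the diagonal matrix with entries √(p_i). In particular the nuclear norm of the probability-weighted Gaussian Gram matrix is upper bounded by the Gaussian's value at zero. -/

import Mathlib

open Matrix BigOperators
open scoped RealInnerProductSpace

/-- The nuclear norm of a real matrix `M`: the sum of its singular values, where the singular
values are the square roots of the eigenvalues of the symmetric PSD matrix `Mᵀ M`. -/
noncomputable def nuclearNorm {m n : ℕ} (M : Matrix (Fin m) (Fin n) ℝ) : ℝ :=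
  ∑ i, Real.sqrt ((show (Mᵀ * M).IsHermitian by
    simpa only [Matrix.conjTranspose_eq_transpose_of_trivial] using
      Matrix.isHermitian_conjTranspose_mul_self M).eigenvalues i)

/-- Reinterpret a plain vector as an element of Euclidean space. -/
noncomputable def toEuc {N : ℕ} (x : Fin N → ℝ) : EuclideanSpace ℝ (Fin N) :=
  (WithLp.equiv 2 (Fin N → ℝ)).symm x

@[simp] lemma toEuc_apply {N : ℕ} (x : Fin N → ℝ) (i : Fin N) : toEuc x i = x i := rfl

lemma inner_euc {N : ℕ} (x y : EuclideanSpace ℝ (Fin N)) : ⟪x, y⟫ = (∑ i, x i * y i) := by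
  simp [PiLp.inner_apply, RCLike.inner_apply, conj_trivial]
  exact Finset.sum_congr rfl fun _ _ => mul_comm _ _

lemma norm_sq_euc {N : ℕ} (x : EuclideanSpace ℝ (Fin N)) : ‖x‖ ^ 2 = ∑ i, x i ^ 2 := by
  rw [← real_inner_self_eq_norm_sq, inner_euc]; simp [sq]

lemma cs_sum {ι : Type*} (s : Finset ι) (f g : ι → ℝ) :
    ∑ i ∈ s, f i * g i ≤ Real.sqrt (∑ i ∈ s, f i ^ 2) * Real.sqrt (∑ i ∈ s, g i ^ 2) := by
  calc ∑ i ∈ s, f i * g i ≤ |∑ i ∈ s, f i * g i| := le_abs_self _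
    _ = Real.sqrt ((∑ i ∈ s, f i * g i) ^ 2) := (Real.sqrt_sq_eq_abs _).symm
    _ ≤ Real.sqrt ((∑ i ∈ s, f i ^ 2) * ∑ i ∈ s, g i ^ 2) :=
        Real.sqrt_le_sqrt (Finset.sum_mul_sq_le_sq_mul_sq s f g)
    _ = _ := Real.sqrt_mul (by positivity) _

/-- Bessel-type bound: for an orthonormal family `w`, the sum of `‖Aᵀ w i‖²` is at most the
squared Frobenius norm of `A`. -/
lemma bessel_bound {N : ℕ} {ι : Type*} [Fintype ι] (A : Matrix (Fin N) (Fin N) ℝ)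
    (w : ι → EuclideanSpace ℝ (Fin N)) (hw : Orthonormal ℝ w) :
    ∑ i : ι, ‖toEuc (Aᵀ *ᵥ w i)‖ ^ 2 ≤ ∑ j, ∑ k, (A j k) ^ 2 := by
  have hterm : ∀ i : ι, ‖toEuc (Aᵀ *ᵥ w i)‖ ^ 2
      = ∑ k, (⟪w i, toEuc (fun j => A j k)⟫ : ℝ) ^ 2 := by
    intro i
    rw [norm_sq_euc]
    refine Finset.sum_congr rfl fun k _ => ?_
    rw [inner_euc]
    congr 1
    simp only [toEuc_apply]
    show (Aᵀ *ᵥ (w i : Fin N → ℝ)) k = ∑ j, w i j * A j k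
    simp [Matrix.mulVec, dotProduct, Matrix.transpose_apply, mul_comm]
  calc ∑ i : ι, ‖toEuc (Aᵀ *ᵥ w i)‖ ^ 2
      = ∑ i : ι, ∑ k, (⟪w i, toEuc (fun j => A j k)⟫ : ℝ) ^ 2 :=
        Finset.sum_congr rfl fun i _ => hterm i
    _ = ∑ k, ∑ i : ι, (⟪w i, toEuc (fun j => A j k)⟫ : ℝ) ^ 2 := Finset.sum_comm
    _ ≤ ∑ k, ‖toEuc (fun j => A j k)‖ ^ 2 := by
        refine Finset.sum_le_sum fun k _ => ?_
        have h := hw.sum_inner_products_le (s := Finset.univ) (toEuc (fun j => A j k))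
        simpa [Real.norm_eq_abs, sq_abs] using h
    _ = ∑ k, ∑ j, (A j k) ^ 2 := Finset.sum_congr rfl fun k _ => by
        rw [norm_sq_euc]; simp
    _ = ∑ j, ∑ k, (A j k) ^ 2 := Finset.sum_comm

section
open scoped MatrixOrder
lemma psd_sqrt_exists {N : ℕ} (K : Matrix (Fin N) (Fin N) ℝ) (hK : K.PosSemidef) :
    ∃ R : Matrix (Fin N) (Fin N) ℝ, Rᵀ = R ∧ R * R = K := by
  have h0 : 0 ≤ K := Matrix.nonneg_iff_posSemidef.mpr hK
  refine ⟨CFC.sqrt K, ?_, CFC.sqrt_mul_sqrt_self K h0⟩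
  have h := (CFC.sqrt_nonneg K).isSelfAdjoint
  rw [IsSelfAdjoint, Matrix.star_eq_conjTranspose,
    Matrix.conjTranspose_eq_transpose_of_trivial] at h
  exact h
end

theorem nuclearNorm_weighted_gram_le {N : ℕ} (K : Matrix (Fin N) (Fin N) ℝ)
    (hK : K.PosSemidef) (c : ℝ) (hc : 0 ≤ c) (hdiag : ∀ i, K i i = c)
    (p q : Fin N → ℝ)
    (hp_nn : ∀ i, 0 ≤ p i) (hp_sum : ∑ i, p i = 1)
    (hq_nn : ∀ i, 0 ≤ q i) (hq_sum : ∑ i, q i = 1) :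
    nuclearNorm
        (Matrix.diagonal (fun i => Real.sqrt (p i)) * K *
          Matrix.diagonal (fun i => Real.sqrt (q i))) ≤ c := by
  classical
  set M : Matrix (Fin N) (Fin N) ℝ :=
    Matrix.diagonal (fun i => Real.sqrt (p i)) * K * Matrix.diagonal (fun i => Real.sqrt (q i))
    with hMdef
  obtain ⟨R, hRT0, hRR0⟩ := psd_sqrt_exists K hK
  have hRT : Rᵀ = R := hRT0
  have hRsymm : ∀ j k, R k j = R j k := by
    intro j k
    have h := congrFun (congrFun hRT k) j
    rw [Matrix.transpose_apply] at h
    exact h.symm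
  have hRR : R * R = K := hRR0
  set A : Matrix (Fin N) (Fin N) ℝ := Matrix.diagonal (fun i => Real.sqrt (p i)) * R with hAdef
  set B : Matrix (Fin N) (Fin N) ℝ := Matrix.diagonal (fun i => Real.sqrt (q i)) * R with hBdef
  have hMAB : M = A * Bᵀ := by
    rw [hAdef, hBdef, Matrix.transpose_mul, Matrix.diagonal_transpose, hRT, hMdef, ← hRR]
    simp [Matrix.mul_assoc]
  -- Frobenius norms of A and B
  have hRrow : ∀ j, ∑ k, R j k ^ 2 = c := by
    intro j
    calc ∑ k, R j k ^ 2 = ∑ k, R j k * R k j :=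
          Finset.sum_congr rfl fun k _ => by rw [sq, hRsymm j k]
      _ = (R * R) j j := (Matrix.mul_apply).symm
      _ = K j j := by rw [hRR]
      _ = c := hdiag j
  have hAfro : ∑ j, ∑ k, (A j k) ^ 2 = c := by
    have hj : ∀ j, ∑ k, (A j k) ^ 2 = p j * c := by
      intro j
      have hq' : ∀ k, A j k = Real.sqrt (p j) * R j k := fun k =>
        by rw [hAdef, Matrix.diagonal_mul]
      calc ∑ k, (A j k) ^ 2 = ∑ k, p j * R j k ^ 2 := by
            refine Finset.sum_congr rfl fun k _ => ?_
            rw [hq' k, mul_pow, Real.sq_sqrt (hp_nn j)]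
        _ = p j * ∑ k, R j k ^ 2 := by rw [Finset.mul_sum]
        _ = p j * c := by rw [hRrow j]
    rw [Finset.sum_congr rfl fun j _ => hj j, ← Finset.sum_mul, hp_sum, one_mul]
  have hBfro : ∑ j, ∑ k, (B j k) ^ 2 = c := by
    have hj : ∀ j, ∑ k, (B j k) ^ 2 = q j * c := by
      intro j
      have hq' : ∀ k, B j k = Real.sqrt (q j) * R j k := fun k =>
        by rw [hBdef, Matrix.diagonal_mul]
      calc ∑ k, (B j k) ^ 2 = ∑ k, q j * R j k ^ 2 := by
            refine Finset.sum_congr rfl fun k _ => ?_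
            rw [hq' k, mul_pow, Real.sq_sqrt (hq_nn j)]
        _ = q j * ∑ k, R j k ^ 2 := by rw [Finset.mul_sum]
        _ = q j * c := by rw [hRrow j]
    rw [Finset.sum_congr rfl fun j _ => hj j, ← Finset.sum_mul, hq_sum, one_mul]
  -- spectral data
  have hH : (Mᵀ * M).IsHermitian := by
    simpa only [Matrix.conjTranspose_eq_transpose_of_trivial] using
      Matrix.isHermitian_conjTranspose_mul_self M
  have hPSD : (Mᵀ * M).PosSemidef := by
    have h := Matrix.posSemidef_conjTranspose_mul_self M
    rwa [Matrix.conjTranspose_eq_transpose_of_trivial] at h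
  have hlam_nn : ∀ i, 0 ≤ hH.eigenvalues i := fun i => hPSD.eigenvalues_nonneg i
  set v : Fin N → EuclideanSpace ℝ (Fin N) := fun i => hH.eigenvectorBasis i with hvdef
  have hvON : Orthonormal ℝ v := hH.eigenvectorBasis.orthonormal
  have hvortho : ∀ i j, v i ⬝ᵥ v j = if i = j then (1 : ℝ) else 0 := by
    intro i j
    have h := orthonormal_iff_ite.mp hvON i j
    rw [inner_euc] at h
    exact h
  have hMvV : ∀ j, (Mᵀ * M) *ᵥ v j = hH.eigenvalues j • v j := fun j =>
    hH.mulVec_eigenvectorBasis j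
  have key : ∀ x y : Fin N → ℝ, x ⬝ᵥ ((Mᵀ * M) *ᵥ y) = (M *ᵥ x) ⬝ᵥ (M *ᵥ y) := by
    intro x y
    rw [← Matrix.mulVec_mulVec, Matrix.dotProduct_mulVec, Matrix.vecMul_transpose]
  have hMvMv : ∀ i j, (M *ᵥ v i) ⬝ᵥ (M *ᵥ v j)
      = hH.eigenvalues j * (if i = j then (1 : ℝ) else 0) := by
    intro i j
    rw [← key, hMvV j, dotProduct_smul, smul_eq_mul, hvortho i j]
  -- left singular vectors
  set w : {i : Fin N // hH.eigenvalues i ≠ 0} → EuclideanSpace ℝ (Fin N) :=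
    fun i => (Real.sqrt (hH.eigenvalues i.1))⁻¹ • toEuc (M *ᵥ v i.1) with hwdef
  have hinnerMM : ∀ i j, (⟪toEuc (M *ᵥ v i), toEuc (M *ᵥ v j)⟫ : ℝ)
      = (M *ᵥ v i) ⬝ᵥ (M *ᵥ v j) := by
    intro i j
    rw [inner_euc]
    rfl
  have hwON : Orthonormal ℝ w := by
    rw [orthonormal_iff_ite]
    intro i j
    simp only [hwdef]
    rw [real_inner_smul_left, real_inner_smul_right, hinnerMM, hMvMv]
    by_cases hij : i = j
    · subst hij
      rw [if_pos rfl, if_pos rfl, mul_one, ← mul_assoc, ← mul_inv,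
        Real.mul_self_sqrt (hlam_nn i.1), inv_mul_cancel₀ i.2]
    · rw [if_neg (fun h => hij (Subtype.ext h)), if_neg hij, mul_zero, mul_zero, mul_zero]
  have hABdot : ∀ x y : Fin N → ℝ, x ⬝ᵥ (M *ᵥ y) = (Aᵀ *ᵥ x) ⬝ᵥ (Bᵀ *ᵥ y) := by
    intro x y
    rw [hMAB, ← Matrix.mulVec_mulVec, Matrix.dotProduct_mulVec, Matrix.mulVec_transpose,
      Matrix.mulVec_transpose]
  -- the per-index inequality
  have hstep : ∀ i : {i : Fin N // hH.eigenvalues i ≠ 0},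
      Real.sqrt (hH.eigenvalues i.1)
        ≤ ‖toEuc (Aᵀ *ᵥ w i)‖ * ‖toEuc (Bᵀ *ᵥ v i.1)‖ := by
    intro i
    have hs : Real.sqrt (hH.eigenvalues i.1) ≠ 0 :=
      Real.sqrt_ne_zero'.mpr (lt_of_le_of_ne (hlam_nn i.1) (Ne.symm i.2))
    have h1 : (⟪w i, toEuc (M *ᵥ v i.1)⟫ : ℝ) = Real.sqrt (hH.eigenvalues i.1) := by
      simp only [hwdef]
      rw [real_inner_smul_left, hinnerMM, hMvMv, if_pos rfl, mul_one]
      field_simp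
      rw [Real.sq_sqrt (hlam_nn i.1)]
    have h2 : (⟪w i, toEuc (M *ᵥ v i.1)⟫ : ℝ)
        = ⟪toEuc (Aᵀ *ᵥ w i), toEuc (Bᵀ *ᵥ v i.1)⟫ := by
      rw [inner_euc, inner_euc]
      show (w i : Fin N → ℝ) ⬝ᵥ (M *ᵥ v i.1) = toEuc (Aᵀ *ᵥ w i) ⬝ᵥ toEuc (Bᵀ *ᵥ v i.1)
      show (w i : Fin N → ℝ) ⬝ᵥ (M *ᵥ v i.1) = (Aᵀ *ᵥ w i) ⬝ᵥ (Bᵀ *ᵥ v i.1)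
      exact hABdot (w i) (v i.1)
    calc Real.sqrt (hH.eigenvalues i.1)
        = ⟪toEuc (Aᵀ *ᵥ w i), toEuc (Bᵀ *ᵥ v i.1)⟫ := (h1.symm.trans h2)
      _ ≤ _ := real_inner_le_norm _ _
  -- Bessel bounds
  have hbesselA : ∑ i : {i : Fin N // hH.eigenvalues i ≠ 0}, ‖toEuc (Aᵀ *ᵥ w i)‖ ^ 2 ≤ c := by
    calc _ ≤ ∑ j, ∑ k, (A j k) ^ 2 := bessel_bound A w hwON
      _ = c := hAfro
  have hbesselB : ∑ i : {i : Fin N // hH.eigenvalues i ≠ 0}, ‖toEuc (Bᵀ *ᵥ v i.1)‖ ^ 2 ≤ c := by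
    have h1 : ∑ i : {i : Fin N // hH.eigenvalues i ≠ 0}, ‖toEuc (Bᵀ *ᵥ v i.1)‖ ^ 2
        = ∑ i ∈ Finset.univ.filter (fun i => hH.eigenvalues i ≠ 0),
            ‖toEuc (Bᵀ *ᵥ v i)‖ ^ 2 :=
      (Finset.sum_subtype (p := fun i => hH.eigenvalues i ≠ 0)
        (Finset.univ.filter (fun i => hH.eigenvalues i ≠ 0))
        (fun i => by simp) (fun i => ‖toEuc (Bᵀ *ᵥ v i)‖ ^ 2)).symm
    rw [h1]
    calc ∑ i ∈ Finset.univ.filter (fun i => hH.eigenvalues i ≠ 0), ‖toEuc (Bᵀ *ᵥ v i)‖ ^ 2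
        ≤ ∑ i : Fin N, ‖toEuc (Bᵀ *ᵥ v i)‖ ^ 2 :=
          Finset.sum_le_sum_of_subset_of_nonneg (Finset.subset_univ _)
            (fun i _ _ => by positivity)
      _ ≤ ∑ j, ∑ k, (B j k) ^ 2 := bessel_bound B v hvON
      _ = c := hBfro
  -- put everything together
  rw [nuclearNorm]
  have hred : ∑ i, Real.sqrt (hH.eigenvalues i)
      = ∑ i : {i : Fin N // hH.eigenvalues i ≠ 0}, Real.sqrt (hH.eigenvalues i.1) := by
    rw [← Finset.sum_subtype (p := fun i => hH.eigenvalues i ≠ 0)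
      (Finset.univ.filter (fun i => hH.eigenvalues i ≠ 0)) (fun i => by simp)
      (fun i => Real.sqrt (hH.eigenvalues i))]
    refine (Finset.sum_subset (Finset.subset_univ _) ?_).symm
    intro i _ hi
    have h0 : hH.eigenvalues i = 0 := by simpa using hi
    rw [h0, Real.sqrt_zero]
  calc ∑ i, Real.sqrt (hH.eigenvalues i)
      = ∑ i : {i : Fin N // hH.eigenvalues i ≠ 0}, Real.sqrt (hH.eigenvalues i.1) := hred
    _ ≤ ∑ i : {i : Fin N // hH.eigenvalues i ≠ 0},
          ‖toEuc (Aᵀ *ᵥ w i)‖ * ‖toEuc (Bᵀ *ᵥ v i.1)‖ :=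
        Finset.sum_le_sum fun i _ => hstep i
    _ ≤ Real.sqrt (∑ i : {i : Fin N // hH.eigenvalues i ≠ 0}, ‖toEuc (Aᵀ *ᵥ w i)‖ ^ 2)
        * Real.sqrt (∑ i : {i : Fin N // hH.eigenvalues i ≠ 0}, ‖toEuc (Bᵀ *ᵥ v i.1)‖ ^ 2) :=
        cs_sum _ _ _
    _ ≤ Real.sqrt c * Real.sqrt c :=
        mul_le_mul (Real.sqrt_le_sqrt hbesselA) (Real.sqrt_le_sqrt hbesselB)
          (Real.sqrt_nonneg _) (Real.sqrt_nonneg _)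
    _ = c := Real.mul_self_sqrt hc
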